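/- Let E be a real inner product space, let f : E → ℝ be differentiable and convex on all of E, and suppose its gradient is Lipschitz with constant β > 0 (i.e. f is β-smooth). Then for every step size η with 0 ≤ η ≤ 2/β, the gradient update G(w) = w − η • ∇f(w) is 1-expansive: for all u, v ∈ E, ‖(u − η • ∇f(u)) − (v − η • ∇f(v))‖ ≤ ‖u − v‖. -/

import Mathlib

open scoped NNReal
open RealInnerProductSpace

section Aux
variable {E : Type*} [NormedAddCommGroup E] [InnerProductSpace ℝ E]

private lemma hasDerivAt_lineMap_comp {f : E → ℝ} {g : E → E}
    (hg : ∀ z, HasFDerivAt f (innerSL ℝ (g z)) z) (x y : E) (t : ℝ) :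
    HasDerivAt (fun t : ℝ => f (AffineMap.lineMap x y t))
      ⟪g (AffineMap.lineMap x y t), y - x⟫ t := by
  have hL : HasDerivAt (fun t : ℝ => (AffineMap.lineMap x y t : E)) (y - x) t := by
    simp only [AffineMap.lineMap_apply_module']
    exact ((hasDerivAt_id t).smul_const (y - x)).add_const x |>.congr_deriv (by simp)
  have := (hg (AffineMap.lineMap x y t)).comp_hasDerivAt t hL
  simp at this
  exact this

/-- convexity lower bound -/
private lemma inner_grad_le_sub {f : E → ℝ} {g : E → E}
    (hconv : ConvexOn ℝ Set.univ f)
    (hg : ∀ z, HasFDerivAt f (innerSL ℝ (g z)) z) (x y : E) :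
    ⟪g x, y - x⟫ ≤ f y - f x := by
  have hφ : ConvexOn ℝ Set.univ (fun t : ℝ => f (AffineMap.lineMap x y t)) := by
    have := hconv.comp_affineMap (AffineMap.lineMap x y)
    simp [Function.comp] at this
    exact this
  have h0 := hasDerivAt_lineMap_comp hg x y 0
  rw [AffineMap.lineMap_apply_zero] at h0
  have := hφ.le_slope_of_hasDerivAt (Set.mem_univ (0:ℝ)) (Set.mem_univ 1) one_pos h0
  simpa [slope_def_field] using this


/-- descent lemma -/
private lemma descent_lemma {f : E → ℝ} {g : E → E} {β : ℝ≥0}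
    (hg : ∀ z, HasFDerivAt f (innerSL ℝ (g z)) z)
    (hlip : LipschitzWith β g) (x y : E) :
    f y ≤ f x + ⟪g x, y - x⟫ + (β : ℝ) / 2 * ‖y - x‖ ^ 2 := by
  set L : ℝ → E := fun t => AffineMap.lineMap x y t with hLdef
  set ψ : ℝ → ℝ := fun t => f (L t) - t * ⟪g x, y - x⟫ - (β : ℝ) / 2 * ‖y - x‖ ^ 2 * t ^ 2
    with hψdef
  have hψd : ∀ t : ℝ, HasDerivAt ψ
      (⟪g (L t), y - x⟫ - ⟪g x, y - x⟫ - (β : ℝ) / 2 * ‖y - x‖ ^ 2 * (2 * t)) t := by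
    intro t
    have h1 : HasDerivAt (fun t : ℝ => f (L t)) ⟪g (L t), y - x⟫ t :=
      hasDerivAt_lineMap_comp hg x y t
    have h2 : HasDerivAt (fun t : ℝ => t * ⟪g x, y - x⟫) ⟪g x, y - x⟫ t := by
      simpa using (hasDerivAt_id t).mul_const ⟪g x, y - x⟫
    have h3 : HasDerivAt (fun t : ℝ => (β : ℝ) / 2 * ‖y - x‖ ^ 2 * t ^ 2)
        ((β : ℝ) / 2 * ‖y - x‖ ^ 2 * (2 * t)) t := by
      have h := (hasDerivAt_pow 2 t).const_mul ((β : ℝ) / 2 * ‖y - x‖ ^ 2)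
      exact h.congr_deriv (by norm_num)
    exact (h1.sub h2).sub h3
  have hanti : AntitoneOn ψ (Set.Icc 0 1) := by
    apply antitoneOn_of_deriv_nonpos (convex_Icc 0 1)
    · intro t ht
      exact ((hψd t).differentiableAt.continuousAt).continuousWithinAt
    · intro t ht
      exact (hψd t).differentiableAt.differentiableWithinAt
    · intro t ht
      rw [interior_Icc] at ht
      rw [(hψd t).deriv]
      have hb : ⟪g (L t) - g x, y - x⟫ ≤ (β : ℝ) * (t * ‖y - x‖) * ‖y - x‖ := by
        calc ⟪g (L t) - g x, y - x⟫ ≤ ‖g (L t) - g x‖ * ‖y - x‖ :=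
              real_inner_le_norm _ _
          _ ≤ (β : ℝ) * ‖L t - x‖ * ‖y - x‖ := by
              have := hlip.norm_sub_le (L t) x
              nlinarith [norm_nonneg (y - x)]
          _ = (β : ℝ) * (t * ‖y - x‖) * ‖y - x‖ := by
              rw [hLdef]
              simp only [AffineMap.lineMap_apply_module']
              rw [show t • (y - x) + x - x = t • (y - x) by abel, norm_smul]
              rw [Real.norm_eq_abs, abs_of_pos ht.1]
      rw [inner_sub_left] at hb
      nlinarith [hb]
  have h01 := hanti (Set.mem_Icc.2 ⟨le_refl 0, zero_le_one⟩)
      (Set.mem_Icc.2 ⟨zero_le_one, le_refl 1⟩) zero_le_one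
  have hL0 : L 0 = x := by simp [hLdef]
  have hL1 : L 1 = y := by simp [hLdef]
  simp only [hψdef, hL0, hL1] at h01
  nlinarith [h01]
/-- half-step inequality -/
private lemma half_step {f : E → ℝ} {g : E → E} {β : ℝ≥0} (hβ : 0 < β)
    (hconv : ConvexOn ℝ Set.univ f)
    (hg : ∀ z, HasFDerivAt f (innerSL ℝ (g z)) z)
    (hlip : LipschitzWith β g) (u v : E) :
    f u - ⟪g u, u⟫ + 1 / (2 * (β : ℝ)) * ‖g v - g u‖ ^ 2 ≤ f v - ⟪g u, v⟫ := by
  have hβ' : (0:ℝ) < β := by exact_mod_cast hβ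
  set F : E → ℝ := fun w => f w - ⟪g u, w⟫ with hFdef
  set G : E → E := fun w => g w - g u with hGdef
  have hF : ∀ z, HasFDerivAt F (innerSL ℝ (G z)) z := by
    intro z
    have := (hg z).sub (innerSL ℝ (g u)).hasFDerivAt
    simp [hFdef, hGdef, map_sub] at this
    rw [show innerSL ℝ (G z) = innerSL ℝ (g z) - innerSL ℝ (g u) from map_sub _ _ _]
    exact this
  have hFconv : ConvexOn ℝ Set.univ F := by
    refine hconv.sub ⟨convex_univ, ?_⟩
    intro x _ y _ a b ha hb hab
    simp [inner_add_right, real_inner_smul_right]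
  have hFlip : LipschitzWith β G := by
    intro x y
    simpa [hGdef, edist_sub_right] using hlip x y
  -- `u` is a global minimizer of `F`
  have hmin : ∀ w, F u ≤ F w := by
    intro w
    have := inner_grad_le_sub hFconv hF u w
    have hGu : G u = 0 := by simp [hGdef]
    rw [hGu] at this
    simpa using this
  -- descent step from `v`
  set w := v - ((β : ℝ))⁻¹ • G v with hwdef
  have hdesc := descent_lemma hF hFlip v w
  have hwv : w - v = -((β : ℝ))⁻¹ • G v := by rw [hwdef]; abel_nf; simp
  have hkey : F u ≤ F v - 1 / (2 * (β : ℝ)) * ‖G v‖ ^ 2 := by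
    refine le_trans (hmin w) (le_trans hdesc ?_)
    rw [hwv]
    rw [real_inner_smul_right, norm_smul, Real.norm_eq_abs]
    rw [real_inner_self_eq_norm_sq]
    rw [mul_pow, abs_neg, abs_of_pos (by positivity : (0:ℝ) < ((β:ℝ))⁻¹)]
    have hne : (β:ℝ) ≠ 0 := ne_of_gt hβ'
    have key : -((β:ℝ))⁻¹ * ‖G v‖ ^ 2 + (β:ℝ) / 2 * (((β:ℝ))⁻¹ ^ 2 * ‖G v‖ ^ 2)
        = -(1 / (2 * (β:ℝ)) * ‖G v‖ ^ 2) := by field_simp; ring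
    linarith [key]
  have : F u + 1 / (2 * (β : ℝ)) * ‖G v‖ ^ 2 ≤ F v := by linarith
  simpa [hFdef, hGdef] using this

/-- co-coercivity of the gradient (Baillon–Haddad) -/
private lemma cocoercivity {f : E → ℝ} {g : E → E} {β : ℝ≥0} (hβ : 0 < β)
    (hconv : ConvexOn ℝ Set.univ f)
    (hg : ∀ z, HasFDerivAt f (innerSL ℝ (g z)) z)
    (hlip : LipschitzWith β g) (u v : E) :
    1 / (β : ℝ) * ‖g u - g v‖ ^ 2 ≤ ⟪g u - g v, u - v⟫ := by
  have hβ' : (0:ℝ) < β := by exact_mod_cast hβ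
  have h1 := half_step hβ hconv hg hlip u v
  have h2 := half_step hβ hconv hg hlip v u
  have hsymm : ‖g v - g u‖ = ‖g u - g v‖ := norm_sub_rev _ _
  rw [hsymm] at h1
  rw [inner_sub_left, inner_sub_right, inner_sub_right]
  have := real_inner_comm (g u) v
  have := real_inner_comm (g v) u
  have h4 : 1 / (β:ℝ) * ‖g u - g v‖ ^ 2
      = 1 / (2 * (β:ℝ)) * ‖g u - g v‖ ^ 2 + 1 / (2 * (β:ℝ)) * ‖g u - g v‖ ^ 2 := by
    field_simp; ring
  linarith [h1, h2]

end Aux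

/-- **Expansiveness of the gradient update.** If `f` is differentiable, convex
on all of `E`, and `β`-smooth (its gradient is `β`-Lipschitz), then for any
step size `0 ≤ η ≤ 2/β` the gradient update `w ↦ w − η • ∇f w` is
1-expansive. -/
theorem gradient_update_one_expansive
    {E : Type*} [NormedAddCommGroup E] [InnerProductSpace ℝ E] [CompleteSpace E]
    (f : E → ℝ) (β : ℝ≥0) (hβ : 0 < β)
    (hdiff : Differentiable ℝ f)
    (hconv : ConvexOn ℝ Set.univ f)
    (hsmooth : LipschitzWith β (gradient f))
    (η : ℝ) (hη0 : 0 ≤ η) (hη : η ≤ 2 / β) :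
    ∀ u v : E,
      ‖(u - η • gradient f u) - (v - η • gradient f v)‖ ≤ ‖u - v‖ := by
  intro u v
  have hβ' : (0:ℝ) < β := by exact_mod_cast hβ
  have hg : ∀ z, HasFDerivAt f (innerSL ℝ (gradient f z)) z := by
    intro z
    have h := (hdiff z).hasGradientAt
    rw [hasGradientAt_iff_hasFDerivAt] at h
    have : innerSL ℝ (gradient f z) = InnerProductSpace.toDual ℝ E (gradient f z) := by
      ext w
      simp [InnerProductSpace.toDual_apply_apply]
    rwa [this]
  have hco := cocoercivity hβ hconv hg hsmooth u v
  set d := gradient f u - gradient f v with hddef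
  have hrw : (u - η • gradient f u) - (v - η • gradient f v) = (u - v) - η • d := by
    rw [hddef, smul_sub]; abel
  rw [hrw]
  have hsq : ‖(u - v) - η • d‖ ^ 2 ≤ ‖u - v‖ ^ 2 := by
    rw [norm_sub_sq_real, real_inner_smul_right, norm_smul, Real.norm_eq_abs,
      abs_of_nonneg hη0, mul_pow]
    have hcomm : ⟪u - v, d⟫ = ⟪d, u - v⟫ := real_inner_comm _ _
    have h5 : η ^ 2 ≤ η * (2 / (β:ℝ)) := by nlinarith
    have h6 : η * (2 / (β:ℝ)) * ‖d‖ ^ 2 ≤ 2 * (η * ⟪d, u - v⟫) := by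
      have h := mul_le_mul_of_nonneg_left hco (by linarith : (0:ℝ) ≤ 2 * η)
      have e : η * (2 / (β:ℝ)) * ‖d‖ ^ 2 = 2 * η * (1 / (β:ℝ) * ‖d‖ ^ 2) := by ring
      rw [e]
      linarith [h]
    have h7 : η ^ 2 * ‖d‖ ^ 2 ≤ η * (2 / (β:ℝ)) * ‖d‖ ^ 2 :=
      mul_le_mul_of_nonneg_right h5 (sq_nonneg _)
    rw [hcomm]
    linarith [h7, h6]
  nlinarith [hsq, norm_nonneg (u - v), norm_nonneg ((u - v) - η • d)]
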